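/- arXiv:1902.03973 — 5 statements merged into one kernel-verified Lean document; each statement's English description precedes it below -/
import Mathlib

section
/- Let ε, μ > 0, δ := √(μ/3), T > 0, and let ζ, q : [0,T] × [0,∞) → ℝ be of class C³ (all partial derivatives up to order three exist and are continuous) with h := 1 + εζ > 0 everywhere, satisfying the momentum equation of the dimensionless Abbott–Boussinesq system: ∂_t q − (μ/3) ∂_x² ∂_t q + ∂_x 𝔣(ζ, q) = 0 on [0,T] × [0,∞), where 𝔣(ζ,q) = (1/(2ε))(h² − 1) + ε q²/h. Fix t ∈ [0,T], and suppose that x ↦ ∂_t q(t,x) is square-integrable on (0,∞), and that w : [0,∞) → ℝ is a C² function, square-integrable on (0,∞), with w − (μ/3) w″ = −∂_x 𝔣(ζ,q)(t,·) on [0,∞) and w(0) = 0. Then ∂_t q(t,x) = w(x) + ∂_t q(t,0) · exp(−x/δ) for all x ≥ 0. -/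
open Set MeasureTheory Filter

/-- `f` is square-integrable on `(0, ∞)` (w.r.t. Lebesgue measure). -/
def SqInt (f : ℝ → ℝ) : Prop := IntegrableOn (fun x => f x ^ 2) (Ioi 0)

/-- `u` is of class C² on `[0, ∞)`, with first derivative `u'` and second
derivative `u''` (one-sided at the endpoint, `u''` continuous). -/
def C2Half (u u' u'' : ℝ → ℝ) : Prop :=
  (∀ x ∈ Ici (0 : ℝ), HasDerivWithinAt u (u' x) (Ici 0) x) ∧
  (∀ x ∈ Ici (0 : ℝ), HasDerivWithinAt u' (u'' x) (Ici 0) x) ∧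
  ContinuousOn u'' (Ici 0)

/-- Constancy on the half-line from vanishing one-sided derivative. -/
lemma const_of_derivWithin_zero (f g : ℝ → ℝ)
    (h : ∀ x ∈ Ici (0:ℝ), HasDerivWithinAt f (g x) (Ici 0) x)
    (hz : ∀ x ∈ Ici (0:ℝ), g x = 0) : ∀ x ∈ Ici (0:ℝ), f x = f 0 := by
  intro x hx
  have hcont : ContinuousOn f (Icc 0 x) := fun y hy =>
    ((h y hy.1).continuousWithinAt).mono Icc_subset_Ici_self
  refine constant_of_has_deriv_right_zero (f := f) (a := 0) (b := x) hcont ?_ x ⟨hx, le_rfl⟩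
  intro y hy
  have := (h y hy.1).mono (Ici_subset_Ici.mpr hy.1)
  rwa [hz y hy.1] at this

lemma exp_hasDerivAt (m x : ℝ) :
    HasDerivAt (fun y => Real.exp (m*y)) (m * Real.exp (m*x)) x := by
  have h : HasDerivAt (fun y : ℝ => m * y) m x := by
    simpa using (hasDerivAt_id x).const_mul m
  simpa [mul_comm] using h.exp

/-- L² solutions of `u'' = k² u` on the half-line decay exponentially. -/
lemma ode_decay (k : ℝ) (hk : 0 < k) (u u' u'' : ℝ → ℝ)
    (h1 : ∀ x ∈ Ici (0:ℝ), HasDerivWithinAt u (u' x) (Ici 0) x)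
    (h2 : ∀ x ∈ Ici (0:ℝ), HasDerivWithinAt u' (u'' x) (Ici 0) x)
    (hode : ∀ x ∈ Ici (0:ℝ), u'' x = k^2 * u x)
    (hL2 : IntegrableOn (fun x => u x ^ 2) (Ioi 0)) :
    ∀ x ∈ Ici (0:ℝ), u x = u 0 * Real.exp (-(k*x)) := by
  set c : ℝ := u' 0 + k * u 0 with hc
  -- Step 1: (u' + k u) e^{-kx} is constant, hence u' + k u = c e^{kx}.
  have step1 : ∀ x ∈ Ici (0:ℝ), u' x + k * u x = c * Real.exp (k*x) := by
    have key := const_of_derivWithin_zero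
      (fun x => (u' x + k * u x) * Real.exp (-k*x))
      (fun x => (u'' x + k * u' x) * Real.exp (-k*x)
        + (u' x + k * u x) * (-k * Real.exp (-k*x)))
      (fun x hx => ((h2 x hx).add ((h1 x hx).const_mul k)).mul
        ((exp_hasDerivAt (-k) x).hasDerivWithinAt))
      (fun x hx => by simp only [hode x hx]; ring)
    intro x hx
    have h0 := key x hx
    simp only [mul_zero, Real.exp_zero, mul_one] at h0
    have hexp : Real.exp (-k*x) * Real.exp (k*x) = 1 := by
      rw [← Real.exp_add]; simp
    have hne : Real.exp (-k*x) ≠ 0 := Real.exp_ne_zero _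
    have := congrArg (fun z => z * Real.exp (k*x)) h0
    calc u' x + k * u x = (u' x + k * u x) * (Real.exp (-k*x) * Real.exp (k*x)) := by
          rw [hexp]; ring
      _ = c * Real.exp (k*x) := by rw [← mul_assoc, this, hc]
  -- Step 2: explicit formula for u.
  set a : ℝ := c / (2*k) with ha
  set b : ℝ := u 0 - a with hb
  have step2 : ∀ x ∈ Ici (0:ℝ), u x = b * Real.exp (-(k*x)) + a * Real.exp (k*x) := by
    have key := const_of_derivWithin_zero
      (fun x => u x * Real.exp (k*x) - a * Real.exp (2*k*x))
      (fun x => (u' x * Real.exp (k*x) + u x * (k * Real.exp (k*x)))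
        - a * (2*k * Real.exp (2*k*x)))
      (fun x hx => ((h1 x hx).mul ((exp_hasDerivAt k x).hasDerivWithinAt)).sub
        (((exp_hasDerivAt (2*k) x).hasDerivWithinAt).const_mul a))
      ?_
    · intro x hx
      have h0 := key x hx
      simp only [mul_zero, Real.exp_zero, mul_one] at h0
      have hE : Real.exp (2*k*x) = Real.exp (k*x) * Real.exp (k*x) := by
        rw [← Real.exp_add]; ring_nf
      have hexp2 : Real.exp (k*x) * Real.exp (-(k*x)) = 1 := by
        rw [← Real.exp_add]; simp
      rw [hE] at h0
      have h3 : u x * Real.exp (k*x)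
          = (u 0 - a) + a * (Real.exp (k*x) * Real.exp (k*x)) := by linarith
      calc u x = (u x * Real.exp (k*x)) * Real.exp (-(k*x)) := by
            rw [mul_assoc, hexp2, mul_one]
        _ = ((u 0 - a) + a * (Real.exp (k*x) * Real.exp (k*x))) * Real.exp (-(k*x)) := by
            rw [h3]
        _ = b * Real.exp (-(k*x))
            + a * (Real.exp (k*x) * (Real.exp (k*x) * Real.exp (-(k*x)))) := by
            rw [hb]; ring
        _ = b * Real.exp (-(k*x)) + a * Real.exp (k*x) := by rw [hexp2, mul_one]
    · intro x hx
      have hs := step1 x hx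
      have hE : Real.exp (2*k*x) = Real.exp (k*x) * Real.exp (k*x) := by
        rw [← Real.exp_add]; ring_nf
      have hka : a * (2*k) = c := by
        rw [ha]; field_simp
      calc (u' x * Real.exp (k*x) + u x * (k * Real.exp (k*x)))
            - a * (2*k * Real.exp (2*k*x))
          = (u' x + k * u x) * Real.exp (k*x) - (a * (2*k)) * Real.exp (2*k*x) := by ring
        _ = 0 := by rw [hs, hka, hE]; ring
  -- Step 3: a = 0, since otherwise u grows exponentially and cannot be L².
  have ha0 : a = 0 := by
    by_contra hane
    have hA : 0 < |a| := abs_pos.mpr hane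
    have hinf : Tendsto (fun x : ℝ => Real.exp (k*x)) atTop atTop :=
      Real.tendsto_exp_atTop.comp (Tendsto.const_mul_atTop hk tendsto_id)
    obtain ⟨x₀, hx₀⟩ := (eventually_atTop.mp
      ((hinf.eventually_ge_atTop (2*|b|/|a|)).and (eventually_ge_atTop (0:ℝ))))
    have hx₀0 : (0:ℝ) ≤ x₀ := (hx₀ x₀ le_rfl).2
    have hbd : ∀ x ∈ Ioi x₀, a^2/4 ≤ u x ^ 2 := by
      intro x hx
      have hxp := hx₀ x (le_of_lt hx)
      have hx0 : (0:ℝ) ≤ x := hxp.2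
      have hform := step2 x hx0
      set E1 := Real.exp (-(k*x)) with hE1
      set E2 := Real.exp (k*x) with hE2
      have hE2one : (1:ℝ) ≤ E2 := Real.one_le_exp (by positivity)
      have hE1pos : 0 < E1 := Real.exp_pos _
      have hE1le : E1 ≤ 1 := Real.exp_le_one_iff.mpr (by nlinarith)
      have hBbound : 2 * |b| ≤ |a| * E2 := by
        have h := hxp.1
        rw [div_le_iff₀ hA] at h
        linarith
      have htri : |a| * E2 - |b| * E1 ≤ |u x| := by
        have h1 := abs_sub_abs_le_abs_sub (a * E2) (-(b * E1))
        simp only [sub_neg_eq_add, abs_neg] at h1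
        rw [abs_mul, abs_mul, abs_of_pos (show (0:ℝ) < E2 from Real.exp_pos _),
          abs_of_pos hE1pos] at h1
        have : a * E2 + b * E1 = u x := by rw [hform]; ring
        rwa [this] at h1
      have hlow : |a| / 2 ≤ |u x| := by
        have h1 : |b| * E1 ≤ |b| := by
          nlinarith [abs_nonneg b]
        nlinarith
      have hsq : (|a|/2)*(|a|/2) ≤ |u x| * |u x| :=
        mul_self_le_mul_self (by positivity) hlow
      nlinarith [sq_abs a, sq_abs (u x)]
    have hint : IntegrableOn (fun x => u x ^ 2) (Ioi x₀) :=
      hL2.mono_set (Ioi_subset_Ioi hx₀0)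
    have hconst : IntegrableOn (fun _ : ℝ => a^2/4) (Ioi x₀) := by
      refine Integrable.mono' hint aestronglyMeasurable_const ?_
      rw [ae_restrict_iff' measurableSet_Ioi]
      refine Eventually.of_forall fun x hx => ?_
      rw [Real.norm_eq_abs, abs_of_nonneg (by positivity)]
      exact hbd x hx
    rcases (integrableOn_const_iff (C := a^2/4) (by simp)).mp hconst with h | h
    · exact hane (by have h := enorm_eq_zero.mp h; nlinarith)
    · rw [Real.volume_Ioi] at h; exact absurd h (lt_irrefl _)
  -- Conclusion.
  intro x hx
  have := step2 x hx
  rw [ha0] at this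
  have hb' : b = u 0 := by rw [hb, ha0]; ring
  rw [this, hb']; ring

/-- For a C³ solution of the momentum equation of the dimensionless
Abbott–Boussinesq system, at each fixed time `t` the time derivative `∂ₜq(t,·)`
equals `R₀(−∂ₓ𝔣) + ∂ₜq(t,0)·exp(−x/δ)`, where `w = R₀(−∂ₓ𝔣)` is the Dirichlet
half-line solution and `δ = √(μ/3)`: the dispersive boundary layer. -/
theorem stmt_7 (ε μ T : ℝ) (hε : 0 < ε) (hμ : 0 < μ) (hT : 0 < T)
    (ζ q : ℝ → ℝ → ℝ)
    (hζ : ContDiff ℝ 3 (Function.uncurry ζ))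
    (hq : ContDiff ℝ 3 (Function.uncurry q))
    (hpos : ∀ t x, 0 < 1 + ε * ζ t x)
    (mom : ∀ t ∈ Icc (0 : ℝ) T, ∀ x ∈ Ici (0 : ℝ),
      deriv (fun s => q s x) t
        - μ / 3 * iteratedDeriv 2 (fun y => deriv (fun s => q s y) t) x
        + deriv (fun y =>
            1 / (2 * ε) * ((1 + ε * ζ t y) ^ 2 - 1)
              + ε * (q t y) ^ 2 / (1 + ε * ζ t y)) x = 0)
    (t : ℝ) (ht : t ∈ Icc (0 : ℝ) T)
    (hL2 : SqInt (fun x => deriv (fun s => q s x) t))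
    (w w' w'' : ℝ → ℝ) (hw : C2Half w w' w'') (hwL2 : SqInt w)
    (hweq : ∀ x ∈ Ici (0 : ℝ),
      w x - μ / 3 * w'' x =
        -(deriv (fun y =>
            1 / (2 * ε) * ((1 + ε * ζ t y) ^ 2 - 1)
              + ε * (q t y) ^ 2 / (1 + ε * ζ t y)) x))
    (hw0 : w 0 = 0) :
    ∀ x ∈ Ici (0 : ℝ),
      deriv (fun s => q s x) t
        = w x + deriv (fun s => q s 0) t * Real.exp (-x / Real.sqrt (μ / 3)) := by
  -- the fixed-time time-derivative
  set v : ℝ → ℝ := fun x => deriv (fun s => q s x) t with hv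
  have hδpos : 0 < Real.sqrt (μ/3) := Real.sqrt_pos.mpr (by positivity)
  have hδ2 : Real.sqrt (μ/3) ^ 2 = μ/3 := Real.sq_sqrt (by positivity)
  set k : ℝ := 1 / Real.sqrt (μ/3) with hkdef
  have hk : 0 < k := by positivity
  -- v is C²
  have hveq : v = fun x => (fderiv ℝ (Function.uncurry q) (t, x)) (1, 0) := by
    funext x
    have hdiff : Differentiable ℝ (Function.uncurry q) :=
      hq.differentiable (by norm_num)
    have hline : HasDerivAt (fun s : ℝ => ((s : ℝ), x)) ((1:ℝ), (0:ℝ)) t :=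
      (hasDerivAt_id t).prodMk (hasDerivAt_const t x)
    have := ((hdiff (t, x)).hasFDerivAt.comp_hasDerivAt t hline)
    exact this.deriv
  have hv2 : ContDiff ℝ 2 v := by
    rw [hveq]
    have hF : ContDiff ℝ 2 (fderiv ℝ (Function.uncurry q)) :=
      hq.fderiv_right (by norm_num)
    exact (hF.comp (contDiff_const.prodMk contDiff_id)).clm_apply contDiff_const
  have hv2' : ContDiff ℝ ((1:ℕ∞) + 1) v := by
    convert hv2 using 2
    norm_num
  have hvdiff : Differentiable ℝ v := (contDiff_succ_iff_deriv.mp hv2').1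
  have hdv1 : ContDiff ℝ 1 (deriv v) := (contDiff_succ_iff_deriv.mp hv2').2.2
  have hdvdiff : Differentiable ℝ (deriv v) := hdv1.differentiable one_ne_zero
  have hit2 : iteratedDeriv 2 v = deriv (deriv v) := by
    rw [iteratedDeriv_succ, iteratedDeriv_one]
  -- the ODE for u = v - w
  have hode : ∀ x ∈ Ici (0:ℝ),
      iteratedDeriv 2 v x - w'' x = k^2 * (v x - w x) := by
    intro x hx
    have hm := mom t ht x hx
    have hwe := hweq x hx
    have hk2 : k^2 = 3/μ := by
      rw [hkdef, div_pow, one_pow, hδ2]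
      field_simp
    have hμ3 : (0:ℝ) < μ/3 := by positivity
    rw [hk2]
    have hmv : v x - μ / 3 * iteratedDeriv 2 v x
        + deriv (fun y =>
            1 / (2 * ε) * ((1 + ε * ζ t y) ^ 2 - 1)
              + ε * (q t y) ^ 2 / (1 + ε * ζ t y)) x = 0 := hm
    field_simp
    linarith [hmv, hwe]
  have hdecay := ode_decay k hk (fun x => v x - w x)
    (fun x => deriv v x - w' x) (fun x => iteratedDeriv 2 v x - w'' x)
    (fun x hx => ((hvdiff x).hasDerivAt.hasDerivWithinAt).sub (hw.1 x hx))
    (fun x hx => by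
      have : HasDerivAt (deriv v) (iteratedDeriv 2 v x) x := by
        rw [hit2]; exact (hdvdiff x).hasDerivAt
      exact this.hasDerivWithinAt.sub (hw.2.1 x hx))
    hode ?_
  · intro x hx
    have h := hdecay x hx
    simp only [hw0, sub_zero] at h
    have hxk : -(k * x) = -x / Real.sqrt (μ/3) := by
      rw [hkdef]; ring
    rw [hxk] at h
    have : v x = w x + v 0 * Real.exp (-x / Real.sqrt (μ/3)) := by linarith
    exact this
  · -- square integrability of v - w
    have hvcont : Continuous v := hv2.continuous
    have hwcont : ContinuousOn w (Ici 0) := fun x hx => (hw.1 x hx).continuousWithinAt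
    have hmeas : AEStronglyMeasurable (fun x => (v x - w x)^2)
        (volume.restrict (Ioi 0)) := by
      have : ContinuousOn (fun x => (v x - w x)^2) (Ioi 0) :=
        ((hvcont.continuousOn.sub (hwcont.mono Ioi_subset_Ici_self)).pow 2)
      exact this.aestronglyMeasurable measurableSet_Ioi
    have hbig : IntegrableOn (fun x => 2 * v x ^2 + 2 * w x ^2) (Ioi 0) :=
      (hL2.const_mul 2).add (hwL2.const_mul 2)
    refine Integrable.mono' hbig hmeas ?_
    refine Eventually.of_forall fun x => ?_
    show ‖(v x - w x)^2‖ ≤ 2 * v x ^2 + 2 * w x ^2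
    rw [Real.norm_eq_abs, abs_of_nonneg (by positivity)]
    nlinarith [sq_nonneg (v x + w x)]
end

section
/- (Proposition 1.) Let ε, μ > 0, δ := √(μ/3), T > 0, and let ζ, q : [0,T] × [0,∞) → ℝ be of class C³ with h := 1 + εζ > 0 everywhere, satisfying the dimensionless Abbott–Boussinesq system ∂_t ζ + ∂_x q = 0 and ∂_t q − (μ/3) ∂_x² ∂_t q + ∂_x 𝔣(ζ, q) = 0 on [0,T] × [0,∞), where 𝔣(ζ,q) = (1/(2ε))(h² − 1) + ε q²/h. Suppose that for each t ∈ [0,T] the function x ↦ ∂_t q(t,x) is square-integrable on (0,∞), and that v : [0,T] × [0,∞) → ℝ is such that for each t, v(t,·) is C³ with v(t,·), ∂_x v(t,·), ∂_x² v(t,·), ∂_x³ v(t,·) square-integrable on (0,∞), v(t,·) − (μ/3) ∂_x² v(t,·) = 𝔣(ζ,q)(t,·) on [0,∞) and ∂_x v(t,0) = 0. Define f(t) := ζ(t,0) and q̄(t) := q(t,0). Then for all t ∈ [0,T], q̄′(t) − (ε/δ) q̄(t)²/(1 + ε f(t)) = δ f″(t) + (1/δ)(1 + (ε/2) f(t))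 f(t) − (1/δ) v(t,0). -/
open Set MeasureTheory

lemma partial_left {F : ℝ × ℝ → ℝ} (hF : Differentiable ℝ F) (t x : ℝ) :
    HasDerivAt (fun s => F (s, x)) (fderiv ℝ F (t, x) (1, 0)) t := by
  have h := (hF (t, x)).hasFDerivAt.comp_hasDerivAt t
    ((hasDerivAt_id t).prodMk (hasDerivAt_const t x))
  exact h

lemma partial_right {F : ℝ × ℝ → ℝ} (hF : Differentiable ℝ F) (t x : ℝ) :
    HasDerivAt (fun y => F (t, y)) (fderiv ℝ F (t, x) (0, 1)) x := by
  have h := (hF (t, x)).hasFDerivAt.comp_hasDerivAt x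
    ((hasDerivAt_const x t).prodMk (hasDerivAt_id x))
  exact h

lemma fderiv_apply_const {Φ : ℝ × ℝ → (ℝ × ℝ) →L[ℝ] ℝ} {p : ℝ × ℝ}
    (hΦ : DifferentiableAt ℝ Φ p) (w u : ℝ × ℝ) :
    fderiv ℝ (fun p' => Φ p' w) p u = fderiv ℝ Φ p u w := by
  have h := hΦ.hasFDerivAt.clm_apply (hasFDerivAt_const w p)
  rw [h.fderiv]
  simp

lemma const_of_hasDerivWithinAt_zero {f : ℝ → ℝ}
    (hf : ∀ x ∈ Ici (0:ℝ), HasDerivWithinAt f 0 (Ici 0) x) :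
    ∀ x ∈ Ici (0:ℝ), f x = f 0 := by
  intro x hx
  apply (convex_Ici (0:ℝ)).is_const_of_fderivWithin_eq_zero (𝕜 := ℝ)
    (fun y hy => (hf y hy).differentiableWithinAt) ?_ hx self_mem_Ici
  intro y hy
  have h := (hf y hy).hasFDerivWithinAt.fderivWithin ((uniqueDiffOn_Ici 0) y hy)
  rw [h]
  ext z
  simp

lemma sqInt_add {f g : ℝ → ℝ} (hf : SqInt f) (hg : SqInt g)
    (hfc : ContinuousOn f (Ici 0)) (hgc : ContinuousOn g (Ici 0)) :
    SqInt (fun x => f x + g x) := by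
  have hmeas : AEStronglyMeasurable (fun x => (f x + g x) ^ 2) (volume.restrict (Ioi 0)) := by
    apply ContinuousOn.aestronglyMeasurable _ measurableSet_Ioi
    exact ((hfc.add hgc).mono Ioi_subset_Ici_self).pow 2
  have hint : Integrable (fun x => 2 * (f x ^ 2 + g x ^ 2)) (volume.restrict (Ioi 0)) :=
    (hf.add hg).const_mul 2
  refine hint.mono' hmeas ?_
  filter_upwards with x
  have h2 : (f x + g x) ^ 2 ≤ 2 * (f x ^ 2 + g x ^ 2) := by nlinarith [sq_nonneg (f x - g x)]
  simpa [Real.norm_eq_abs, abs_of_nonneg (sq_nonneg (f x + g x))] using h2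

lemma not_sqInt_growth {A B k : ℝ} (hk : 0 < k) (hA : A ≠ 0) :
    ¬ SqInt (fun x => A * Real.exp (k * x) + B * Real.exp (-(k * x))) := by
  intro h
  have habs : 0 < |A| := abs_pos.mpr hA
  have htend : Filter.Tendsto (fun x => |A| * Real.exp (k * x) - |B|) Filter.atTop Filter.atTop := by
    apply Filter.tendsto_atTop_add_const_right
    exact (Real.tendsto_exp_atTop.comp (Filter.Tendsto.const_mul_atTop hk Filter.tendsto_id)).const_mul_atTop habs
  obtain ⟨M, hM⟩ := (htend.eventually_ge_atTop 1).exists_forall_of_atTop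
  set M' := max M 0 with hM'
  have hbd : ∀ x ∈ Ioi M', (1:ℝ) ≤ (A * Real.exp (k * x) + B * Real.exp (-(k * x))) ^ 2 := by
    intro x hx
    have hx1 : M ≤ x := le_trans (le_max_left _ _) (le_of_lt hx)
    have hx0 : 0 ≤ x := le_trans (le_max_right _ _) (le_of_lt hx)
    have h1 : (1:ℝ) ≤ |A| * Real.exp (k * x) - |B| := hM x hx1
    have h2 : |A * Real.exp (k * x)| - |B * Real.exp (-(k * x))| ≤
        |A * Real.exp (k * x) + B * Real.exp (-(k * x))| := by
      have h := abs_sub_abs_le_abs_sub (A * Real.exp (k * x)) (-(B * Real.exp (-(k * x))))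
      simpa [sub_neg_eq_add] using h
    have hexple : Real.exp (-(k * x)) ≤ 1 := Real.exp_le_one_iff.mpr (by nlinarith)
    have h3 : (1:ℝ) ≤ |A * Real.exp (k * x) + B * Real.exp (-(k * x))| := by
      have e1 : |A * Real.exp (k * x)| = |A| * Real.exp (k * x) := by
        rw [abs_mul, abs_of_pos (Real.exp_pos _)]
      have e2 : |B * Real.exp (-(k * x))| = |B| * Real.exp (-(k * x)) := by
        rw [abs_mul, abs_of_pos (Real.exp_pos _)]
      nlinarith [abs_nonneg B]
    calc (1:ℝ) = 1 ^ 2 := by norm_num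
      _ ≤ |A * Real.exp (k * x) + B * Real.exp (-(k * x))| ^ 2 := by
          apply pow_le_pow_left₀ (by norm_num) h3
      _ = _ := sq_abs _
  have hsub : IntegrableOn (fun x => (A * Real.exp (k * x) + B * Real.exp (-(k * x))) ^ 2) (Ioi M') := by
    apply h.mono_set
    intro x hx
    exact lt_of_le_of_lt (le_max_right M 0) hx
  have hone : IntegrableOn (fun _ : ℝ => (1:ℝ)) (Ioi M') := by
    refine hsub.mono' aestronglyMeasurable_const ?_
    rw [ae_restrict_iff' measurableSet_Ioi]
    filter_upwards with x hx
    simpa using hbd x hx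
  rw [integrableOn_const_iff] at hone
  simp [Real.volume_Ioi] at hone

/-- Proposition 1 of the paper: for a C³ solution `(ζ,q)` of the dimensionless
Abbott–Boussinesq system, the boundary values `q̄(t) = q(t,0)` and
`f(t) = ζ(t,0)` satisfy the nonlinear ODE
`q̄′ − (ε/δ) q̄²/(1+εf) = δ f″ + (1/δ)(1 + (ε/2)f) f − (1/δ) R̲₁𝔣(ζ,q)`,
where for each `t`, `v(t,·) = R₁𝔣(ζ,q)(t,·)` is the Neumann half-line solution
and `δ = √(μ/3)`. -/
theorem stmt_9 (ε μ T : ℝ) (hε : 0 < ε) (hμ : 0 < μ) (hT : 0 < T)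
    (ζ q : ℝ → ℝ → ℝ)
    (hζ : ContDiff ℝ 3 (Function.uncurry ζ))
    (hq : ContDiff ℝ 3 (Function.uncurry q))
    (hpos : ∀ t x, 0 < 1 + ε * ζ t x)
    (mass : ∀ t ∈ Icc (0 : ℝ) T, ∀ x ∈ Ici (0 : ℝ),
      deriv (fun s => ζ s x) t + deriv (fun y => q t y) x = 0)
    (mom : ∀ t ∈ Icc (0 : ℝ) T, ∀ x ∈ Ici (0 : ℝ),
      deriv (fun s => q s x) t
        - μ / 3 * iteratedDeriv 2 (fun y => deriv (fun s => q s y) t) x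
        + deriv (fun y =>
            1 / (2 * ε) * ((1 + ε * ζ t y) ^ 2 - 1)
              + ε * (q t y) ^ 2 / (1 + ε * ζ t y)) x = 0)
    (hL2 : ∀ t ∈ Icc (0 : ℝ) T, SqInt (fun x => deriv (fun s => q s x) t))
    (v v1 v2 v3 : ℝ → ℝ → ℝ)
    (hv1 : ∀ t ∈ Icc (0 : ℝ) T, ∀ x ∈ Ici (0 : ℝ),
      HasDerivWithinAt (v t) (v1 t x) (Ici 0) x)
    (hv2 : ∀ t ∈ Icc (0 : ℝ) T, ∀ x ∈ Ici (0 : ℝ),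
      HasDerivWithinAt (v1 t) (v2 t x) (Ici 0) x)
    (hv3 : ∀ t ∈ Icc (0 : ℝ) T, ∀ x ∈ Ici (0 : ℝ),
      HasDerivWithinAt (v2 t) (v3 t x) (Ici 0) x)
    (hv3c : ∀ t ∈ Icc (0 : ℝ) T, ContinuousOn (v3 t) (Ici 0))
    (hvL2 : ∀ t ∈ Icc (0 : ℝ) T,
      SqInt (v t) ∧ SqInt (v1 t) ∧ SqInt (v2 t) ∧ SqInt (v3 t))
    (hveq : ∀ t ∈ Icc (0 : ℝ) T, ∀ x ∈ Ici (0 : ℝ),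
      v t x - μ / 3 * v2 t x =
        1 / (2 * ε) * ((1 + ε * ζ t x) ^ 2 - 1) + ε * (q t x) ^ 2 / (1 + ε * ζ t x))
    (hvN : ∀ t ∈ Icc (0 : ℝ) T, v1 t 0 = 0) :
    ∀ t ∈ Icc (0 : ℝ) T,
      deriv (fun s => q s 0) t
        - ε / Real.sqrt (μ / 3) * (q t 0) ^ 2 / (1 + ε * ζ t 0)
      = Real.sqrt (μ / 3) * iteratedDeriv 2 (fun s => ζ s 0) t
        + 1 / Real.sqrt (μ / 3) * (1 + ε / 2 * ζ t 0) * ζ t 0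
        - 1 / Real.sqrt (μ / 3) * v t 0 := by
  intro t ht'
  set δ := Real.sqrt (μ / 3) with hδdef
  have hμ3 : (0:ℝ) < μ / 3 := by linarith
  have hδpos : 0 < δ := Real.sqrt_pos.mpr hμ3
  have hδ2 : δ ^ 2 = μ / 3 := Real.sq_sqrt hμ3.le
  have hδne : δ ≠ 0 := ne_of_gt hδpos
  have hμne : μ ≠ 0 := ne_of_gt hμ
  have hεne : ε ≠ 0 := ne_of_gt hε
  set k := 1 / δ with hkdef
  have hkpos : 0 < k := by positivity
  -- smoothness setup for q
  have hFd : Differentiable ℝ (Function.uncurry q) := hq.differentiable (by norm_num)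
  set Φ := fderiv ℝ (Function.uncurry q) with hΦdef
  have hΦ : ContDiff ℝ 2 Φ := hq.fderiv_right (by norm_num)
  have hΦd : Differentiable ℝ Φ := hΦ.differentiable (by norm_num)
  set G := fun p : ℝ × ℝ => Φ p (1, 0) with hGdef
  set G2 := fun p : ℝ × ℝ => Φ p (0, 1) with hG2def
  have hG : ContDiff ℝ 2 G := hΦ.clm_apply contDiff_const
  have hG2c : ContDiff ℝ 2 G2 := hΦ.clm_apply contDiff_const
  have hGd : Differentiable ℝ G := hG.differentiable (by norm_num)
  have hG2d : Differentiable ℝ G2 := hG2c.differentiable (by norm_num)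
  set H := fun p : ℝ × ℝ => fderiv ℝ G p (0, 1) with hHdef
  have hH : ContDiff ℝ 1 H := (hG.fderiv_right (by norm_num)).clm_apply contDiff_const
  have hHd : Differentiable ℝ H := hH.differentiable (by norm_num)
  -- partial derivative identifications
  have hQ1 : ∀ s x : ℝ, deriv (fun s' => q s' x) s = G (s, x) := by
    intro s x
    simpa [hGdef, hΦdef] using (partial_left hFd s x).deriv
  have hQ1x : ∀ x : ℝ, HasDerivAt (fun y => G (t, y)) (H (t, x)) x :=
    fun x => partial_right hGd t x
  set K := fun x : ℝ => fderiv ℝ H (t, x) (0, 1) with hKdef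
  have hHx : ∀ x : ℝ, HasDerivAt (fun y => H (t, y)) (K x) x :=
    fun x => partial_right hHd t x
  have hiter : ∀ x : ℝ, iteratedDeriv 2 (fun y => deriv (fun s => q s y) t) x = K x := by
    intro x
    have e1 : (fun y => deriv (fun s => q s y) t) = fun y => G (t, y) :=
      funext fun y => hQ1 t y
    have e2 : deriv (fun y => G (t, y)) = fun y => H (t, y) :=
      funext fun y => (hQ1x y).deriv
    rw [e1, show (2:ℕ) = 1 + 1 from rfl, iteratedDeriv_succ, iteratedDeriv_one, e2]
    exact (hHx x).deriv
  -- the shallow-water flux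
  set 𝔣 := fun y => 1 / (2 * ε) * ((1 + ε * ζ t y) ^ 2 - 1) + ε * (q t y) ^ 2 / (1 + ε * ζ t y)
    with h𝔣def
  have hζt : Differentiable ℝ (fun y => ζ t y) := by
    have h := (hζ.differentiable (by norm_num)).comp
      ((differentiable_const t).prodMk differentiable_id)
    exact h
  have hqt : Differentiable ℝ (fun y => q t y) := by
    have h := hFd.comp ((differentiable_const t).prodMk differentiable_id)
    exact h
  have hhd : Differentiable ℝ (fun y => 1 + ε * ζ t y) := (hζt.const_mul ε).const_add 1
  have h𝔣d : Differentiable ℝ 𝔣 := by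
    rw [h𝔣def]
    apply Differentiable.add
    · exact ((hhd.pow 2).sub_const 1).const_mul _
    · exact ((hqt.pow 2).const_mul ε).div hhd (fun y => ne_of_gt (hpos t y))
  have h𝔣deriv : ∀ x ∈ Ici (0:ℝ), deriv 𝔣 x = v1 t x - μ / 3 * v3 t x := by
    intro x hx
    have hL : HasDerivWithinAt (fun y => v t y - μ / 3 * v2 t y)
        (v1 t x - μ / 3 * v3 t x) (Ici 0) x :=
      (hv1 t ht' x hx).sub ((hv3 t ht' x hx).const_mul (μ / 3))
    have h2 : HasDerivWithinAt 𝔣 (v1 t x - μ / 3 * v3 t x) (Ici 0) x :=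
      hL.congr (fun y hy => (hveq t ht' y hy).symm) (hveq t ht' x hx).symm
    rw [← (h𝔣d x).derivWithin ((uniqueDiffOn_Ici 0) x hx)]
    exact h2.derivWithin ((uniqueDiffOn_Ici 0) x hx)
  -- w and derivatives
  set w := fun x : ℝ => G (t, x) + v1 t x with hwdef
  set W1 := fun x : ℝ => H (t, x) + v2 t x with hW1def
  set W2 := fun x : ℝ => K x + v3 t x with hW2def
  have hw1 : ∀ x ∈ Ici (0:ℝ), HasDerivWithinAt w (W1 x) (Ici 0) x :=
    fun x hx => ((hQ1x x).hasDerivWithinAt).add (hv2 t ht' x hx)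
  have hw2 : ∀ x ∈ Ici (0:ℝ), HasDerivWithinAt W1 (W2 x) (Ici 0) x :=
    fun x hx => ((hHx x).hasDerivWithinAt).add (hv3 t ht' x hx)
  have hODE : ∀ x ∈ Ici (0:ℝ), W2 x = k ^ 2 * w x := by
    intro x hx
    have hm := mom t ht' x hx
    rw [← h𝔣def] at hm
    rw [hQ1 t x, hiter x, h𝔣deriv x hx] at hm
    have hk2 : k ^ 2 = 3 / μ := by
      rw [hkdef, div_pow, one_pow, hδ2]
      field_simp
    rw [hW2def, hwdef, hk2]
    field_simp
    linarith
  -- ODE analysis: u = W1 + k w satisfies u' = k u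
  set u := fun x : ℝ => W1 x + k * w x with hudef
  have hu : ∀ x ∈ Ici (0:ℝ), HasDerivWithinAt u (k * u x) (Ici 0) x := by
    intro x hx
    have h := (hw2 x hx).add ((hw1 x hx).const_mul k)
    have e : W2 x + k * W1 x = k * u x := by
      rw [hODE x hx, hudef]
      ring
    rwa [e] at h
  have hg1 : ∀ x ∈ Ici (0:ℝ),
      HasDerivWithinAt (fun x => Real.exp (-(k * x)) * u x) 0 (Ici 0) x := by
    intro x hx
    have h1 : HasDerivAt (fun x : ℝ => -(k * x)) (-k) x := by
      have h0 : HasDerivAt (fun x : ℝ => k * x) k x := by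
        simpa using (hasDerivAt_id x).const_mul k
      exact h0.neg
    have he : HasDerivAt (fun x => Real.exp (-(k * x))) (Real.exp (-(k * x)) * (-k)) x := h1.exp
    have h := (he.hasDerivWithinAt).mul (hu x hx)
    refine h.congr_deriv ?_
    ring
  have hu0 : ∀ x ∈ Ici (0:ℝ), Real.exp (-(k * x)) * u x = u 0 := by
    intro x hx
    have h := const_of_hasDerivWithinAt_zero hg1 x hx
    simpa using h
  have huexp : ∀ x ∈ Ici (0:ℝ), u x = Real.exp (k * x) * u 0 := by
    intro x hx
    have h := hu0 x hx
    have e : Real.exp (k * x) * Real.exp (-(k * x)) = 1 := by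
      rw [← Real.exp_add]; simp
    have h2 : Real.exp (k * x) * (Real.exp (-(k * x)) * u x) = Real.exp (k * x) * u 0 := by
      rw [h]
    rwa [← mul_assoc, e, one_mul] at h2
  -- second integration
  have hg2 : ∀ x ∈ Ici (0:ℝ),
      HasDerivWithinAt
        (fun x => Real.exp (k * x) * w x - u 0 * Real.exp (2 * k * x) / (2 * k)) 0 (Ici 0) x := by
    intro x hx
    have he : HasDerivAt (fun x => Real.exp (k * x)) (Real.exp (k * x) * k) x := by
      have h1 : HasDerivAt (fun x : ℝ => k * x) k x := by
        simpa using (hasDerivAt_id x).const_mul k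
      exact h1.exp
    have he2 : HasDerivAt (fun x => u 0 * Real.exp (2 * k * x) / (2 * k))
        (u 0 * (Real.exp (2 * k * x) * (2 * k)) / (2 * k)) x := by
      have h2 : HasDerivAt (fun x : ℝ => 2 * k * x) (2 * k) x := by
        simpa using (hasDerivAt_id x).const_mul (2 * k)
      exact (h2.exp.const_mul (u 0)).div_const (2 * k)
    have h := ((he.hasDerivWithinAt).mul (hw1 x hx)).sub he2.hasDerivWithinAt
    refine h.congr_deriv ?_
    have h5 : W1 x + k * w x = Real.exp (k * x) * u 0 := by
      have h6 := huexp x hx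
      rw [hudef] at h6
      simpa using h6
    have hexp2 : Real.exp (2 * k * x) = Real.exp (k * x) * Real.exp (k * x) := by
      rw [← Real.exp_add]; ring_nf
    have h2kne : (2 * k) ≠ 0 := by positivity
    rw [mul_div_assoc, mul_div_cancel_right₀ _ h2kne, hexp2]
    linear_combination (Real.exp (k * x)) * h5
  have hwform : ∀ x ∈ Ici (0:ℝ),
      w x = (u 0 / (2 * k)) * Real.exp (k * x)
        + (w 0 - u 0 / (2 * k)) * Real.exp (-(k * x)) := by
    intro x hx
    have hc := const_of_hasDerivWithinAt_zero hg2 x hx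
    simp only [mul_zero, Real.exp_zero, one_mul] at hc
    have hexp2 : Real.exp (2 * k * x) = Real.exp (k * x) * Real.exp (k * x) := by
      rw [← Real.exp_add]; ring_nf
    rw [hexp2] at hc
    have h7 : Real.exp (k * x) * w x
        = (u 0 / (2 * k)) * (Real.exp (k * x) * Real.exp (k * x)) + (w 0 - u 0 / (2 * k)) := by
      linear_combination hc
    have h9 : Real.exp (-(k * x)) * Real.exp (k * x) = 1 := by
      rw [← Real.exp_add]; simp
    calc w x = (Real.exp (-(k * x)) * Real.exp (k * x)) * w x := by rw [h9]; ring
      _ = Real.exp (-(k * x)) * (Real.exp (k * x) * w x) := by ring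
      _ = Real.exp (-(k * x)) * ((u 0 / (2 * k)) * (Real.exp (k * x) * Real.exp (k * x))
            + (w 0 - u 0 / (2 * k))) := by rw [h7]
      _ = (u 0 / (2 * k)) * ((Real.exp (-(k * x)) * Real.exp (k * x)) * Real.exp (k * x))
            + (w 0 - u 0 / (2 * k)) * Real.exp (-(k * x)) := by ring
      _ = (u 0 / (2 * k)) * Real.exp (k * x)
            + (w 0 - u 0 / (2 * k)) * Real.exp (-(k * x)) := by rw [h9]; ring
  -- u 0 = 0 via square-integrability
  have hu0zero : u 0 = 0 := by
    by_contra hu0ne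
    have h1 : SqInt (fun x => G (t, x)) := by
      have h := hL2 t ht'
      have e1 : (fun x => deriv (fun s => q s x) t) = fun x => G (t, x) :=
        funext fun x => hQ1 t x
      rwa [e1] at h
    have h2 : SqInt (v1 t) := (hvL2 t ht').2.1
    have hc1 : ContinuousOn (fun x => G (t, x)) (Ici 0) :=
      (hG.continuous.comp (continuous_const.prodMk continuous_id)).continuousOn
    have hc2 : ContinuousOn (v1 t) (Ici 0) :=
      fun x hx => (hv2 t ht' x hx).continuousWithinAt
    have hwsq : SqInt w := by
      rw [hwdef]
      exact sqInt_add h1 h2 hc1 hc2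
    have hexp : SqInt (fun x => (u 0 / (2 * k)) * Real.exp (k * x)
        + (w 0 - u 0 / (2 * k)) * Real.exp (-(k * x))) := by
      unfold SqInt at hwsq ⊢
      apply hwsq.congr_fun ?_ measurableSet_Ioi
      intro x hx
      simp only
      rw [hwform x (Ioi_subset_Ici_self hx)]
    exact not_sqInt_growth hkpos (div_ne_zero hu0ne (by positivity)) hexp
  -- boundary computations
  have hv10 : v1 t 0 = 0 := hvN t ht'
  -- symmetry of second derivative
  have hsym : fderiv ℝ Φ (t, 0) (0, 1) (1, 0) = fderiv ℝ Φ (t, 0) (1, 0) (0, 1) :=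
    second_derivative_symmetric (fun y => (hFd y).hasFDerivAt)
      ((hΦd (t, 0)).hasFDerivAt) (0, 1) (1, 0)
  have hH0 : H (t, 0) = fderiv ℝ G2 (t, 0) (1, 0) := by
    rw [hHdef, hGdef, hG2def]
    simp only
    rw [fderiv_apply_const (hΦd (t, 0)) (1, 0) (0, 1), hsym,
      ← fderiv_apply_const (hΦd (t, 0)) (0, 1) (1, 0)]
  -- mass equation at the boundary
  set Fζ := Function.uncurry ζ with hFζdef
  have hFζd : Differentiable ℝ Fζ := hζ.differentiable (by norm_num)
  set Gζ := fun p : ℝ × ℝ => fderiv ℝ Fζ p (1, 0) with hGζdef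
  have hGζc : ContDiff ℝ 2 Gζ := (hζ.fderiv_right (by norm_num)).clm_apply contDiff_const
  have hGζd : Differentiable ℝ Gζ := hGζc.differentiable (by norm_num)
  have hζderiv : ∀ s : ℝ, deriv (fun s' => ζ s' 0) s = Gζ (s, 0) := by
    intro s
    simpa [hGζdef, hFζdef] using (partial_left hFζd s 0).deriv
  have hmass : ∀ s ∈ Icc (0:ℝ) T, Gζ (s, 0) = -G2 (s, 0) := by
    intro s hs
    have hm := mass s hs 0 self_mem_Ici
    have h2 : deriv (fun y => q s y) 0 = G2 (s, 0) := by
      simpa [hG2def, hΦdef] using (partial_right hFd s 0).deriv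
    rw [hζderiv s, h2] at hm
    linarith
  have hf'' : iteratedDeriv 2 (fun s => ζ s 0) t = -fderiv ℝ G2 (t, 0) (1, 0) := by
    rw [show (2:ℕ) = 1 + 1 from rfl, iteratedDeriv_succ, iteratedDeriv_one]
    have e1 : deriv (fun s => ζ s 0) = fun s => Gζ (s, 0) := funext hζderiv
    rw [e1]
    have hd1 : DifferentiableAt ℝ (fun s => Gζ (s, 0)) t := (partial_left hGζd t 0).differentiableAt
    have hd2 : DifferentiableAt ℝ (fun s => -G2 (s, 0)) t :=
      ((partial_left hG2d t 0).neg).differentiableAt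
    rw [← hd1.derivWithin ((uniqueDiffOn_Icc hT) t ht'),
      derivWithin_congr (fun s hs => hmass s hs) (hmass t ht'),
      hd2.derivWithin ((uniqueDiffOn_Icc hT) t ht')]
    have := ((partial_left hG2d t 0).neg).deriv
    simpa using this
  have hH0f : H (t, 0) = -iteratedDeriv 2 (fun s => ζ s 0) t := by
    rw [hf'', hH0, neg_neg]
  -- final algebra
  have hu00 : H (t, 0) + v2 t 0 + k * (G (t, 0) + v1 t 0) = 0 := by
    have h := hu0zero
    rw [hudef, hW1def, hwdef] at h
    simpa using h
  have hv20 : μ / 3 * v2 t 0 =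
      v t 0 - (1 / (2 * ε) * ((1 + ε * ζ t 0) ^ 2 - 1) + ε * (q t 0) ^ 2 / (1 + ε * ζ t 0)) := by
    have h := hveq t ht' 0 self_mem_Ici
    linarith
  rw [hQ1 t 0]
  rw [hH0f, hv10, add_zero, hkdef] at hu00
  -- hu00 : -I2 + v2 t 0 + 1/δ * G (t,0) = 0
  rw [← hδ2] at hv20
  have hhpos := hpos t 0
  have hhne : (1 + ε * ζ t 0) ≠ 0 := ne_of_gt hhpos
  have hI2 : v2 t 0 = iteratedDeriv 2 (fun s => ζ s 0) t - 1 / δ * G (t, 0) := by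
    linarith
  rw [hI2] at hv20
  simp only [hkdef] at *
  have hδi : δ * δ⁻¹ = 1 := mul_inv_cancel₀ hδne
  have hε1 : ε * ε⁻¹ = 1 := mul_inv_cancel₀ hεne
  linear_combination (-δ⁻¹) * hv20
    + (-(G (t, 0)) * (δ * δ⁻¹ + 1) + iteratedDeriv 2 (fun s => ζ s 0) t * δ) * hδi
    + δ⁻¹ * (ζ t 0 + ε / 2 * ζ t 0 ^ 2) * hε1
end

section
/- Let ε, μ > 0, δ := √(μ/3), T > 0, f ∈ C²([0,T]), and let ζ, q : [0,T] × [0,∞) → ℝ be of class C³ with 1 + εζ > 0 everywhere and 1 + ε f(t) > 0 for all t. Let v : [0,T] × [0,∞) → ℝ be continuous with, for each t, v(t,·) of class C² satisfying v(t,·) − (μ/3) ∂_x² v(t,·) = 𝔣(ζ,q)(t,·) on [0,∞) and ∂_x v(t,0) = 0, where 𝔣(ζ,q) = (1/(2ε))((1+εζ)² − 1) + ε q²/(1+εζ). Suppose (ζ, q) satisfies the reformulated system ∂_t ζ + ∂_x q = 0 and ∂_t q + ∂_x v = Q(t) exp(−x/δ) on [0,T] × [0,∞), where Q(t) := (ε/δ)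 q(t,0)²/(1 + ε f(t)) + δ f″(t) + (1/δ)(1 + (ε/2) f(t)) f(t) − (1/δ) v(t,0). If the compatibility conditions ζ(0,0) = f(0) and ∂_x q(0,0) = −f′(0) hold, then ζ(t,0) = f(t) for all t ∈ [0,T]. -/
open Set

set_option maxHeartbeats 1000000 in
/-- Solutions of the reformulated Boussinesq system
`∂ₜζ + ∂ₓq = 0`, `∂ₜq + ∂ₓR₁𝔣 = Q̲(q̄,f,f″,ζ,q) exp(−x/δ)` satisfying the
compatibility conditions `ζ(0,0) = f(0)` and `∂ₓq(0,0) = −f′(0)` satisfy the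
generating boundary condition `ζ(t,0) = f(t)` for all times. Here `v(t,·)`
represents `R₁𝔣(ζ,q)(t,·)` (Neumann half-line solution, `∂ₓv = v1`,
`∂ₓ²v = v2`) and `δ = √(μ/3)`. -/
theorem stmt_10 (ε μ T : ℝ) (hε : 0 < ε) (hμ : 0 < μ) (hT : 0 < T)
    (f : ℝ → ℝ) (hf : ContDiff ℝ 2 f)
    (ζ q : ℝ → ℝ → ℝ)
    (hζ : ContDiff ℝ 3 (Function.uncurry ζ))
    (hq : ContDiff ℝ 3 (Function.uncurry q))
    (hpos : ∀ t x, 0 < 1 + ε * ζ t x)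
    (hfpos : ∀ t, 0 < 1 + ε * f t)
    (v v1 v2 : ℝ → ℝ → ℝ)
    (hvcont : Continuous (Function.uncurry v))
    (hv1 : ∀ t ∈ Icc (0 : ℝ) T, ∀ x ∈ Ici (0 : ℝ),
      HasDerivWithinAt (v t) (v1 t x) (Ici 0) x)
    (hv2 : ∀ t ∈ Icc (0 : ℝ) T, ∀ x ∈ Ici (0 : ℝ),
      HasDerivWithinAt (v1 t) (v2 t x) (Ici 0) x)
    (hv2c : ∀ t ∈ Icc (0 : ℝ) T, ContinuousOn (v2 t) (Ici 0))
    (hveq : ∀ t ∈ Icc (0 : ℝ) T, ∀ x ∈ Ici (0 : ℝ),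
      v t x - μ / 3 * v2 t x =
        1 / (2 * ε) * ((1 + ε * ζ t x) ^ 2 - 1) + ε * (q t x) ^ 2 / (1 + ε * ζ t x))
    (hvN : ∀ t ∈ Icc (0 : ℝ) T, v1 t 0 = 0)
    (mass : ∀ t ∈ Icc (0 : ℝ) T, ∀ x ∈ Ici (0 : ℝ),
      deriv (fun s => ζ s x) t + deriv (fun y => q t y) x = 0)
    (mom : ∀ t ∈ Icc (0 : ℝ) T, ∀ x ∈ Ici (0 : ℝ),
      deriv (fun s => q s x) t + v1 t x =
        (ε / Real.sqrt (μ / 3) * (q t 0) ^ 2 / (1 + ε * f t)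
          + Real.sqrt (μ / 3) * iteratedDeriv 2 f t
          + 1 / Real.sqrt (μ / 3) * (1 + ε / 2 * f t) * f t
          - 1 / Real.sqrt (μ / 3) * v t 0) * Real.exp (-x / Real.sqrt (μ / 3)))
    (hcomp1 : ζ 0 0 = f 0)
    (hcomp2 : deriv (fun y => q 0 y) 0 = -deriv f 0) :
    ∀ t ∈ Icc (0 : ℝ) T, ζ t 0 = f t := by
  have hμ3 : (0:ℝ) < μ / 3 := by linarith
  set δ' : ℝ := Real.sqrt (μ / 3) with hδdef
  have hδpos : 0 < δ' := Real.sqrt_pos.2 hμ3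
  have hδsq : δ' ^ 2 = μ / 3 := Real.sq_sqrt hμ3.le
  have hδne : δ' ≠ 0 := hδpos.ne'
  -- differentiability infrastructure for q
  have hqd : Differentiable ℝ (Function.uncurry q) := hq.differentiable (by norm_num)
  have hq1 : ContDiff ℝ 2 (fderiv ℝ (Function.uncurry q)) := hq.fderiv_right (by norm_num)
  have hq1d : Differentiable ℝ (fderiv ℝ (Function.uncurry q)) := hq1.differentiable (by norm_num)
  set Gq : ℝ × ℝ → ℝ := fun p => fderiv ℝ (Function.uncurry q) p (0,1) with hGqdef
  set Hq : ℝ × ℝ → ℝ := fun p => fderiv ℝ (Function.uncurry q) p (1,0) with hHqdef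
  have hGq : Differentiable ℝ Gq := hq1d.clm_apply (differentiable_const _)
  have hHq : Differentiable ℝ Hq := hq1d.clm_apply (differentiable_const _)
  have hderiv_x : ∀ s x : ℝ, HasDerivAt (q s) (Gq (s, x)) x := by
    intro s x
    have h1 : HasDerivAt (fun y : ℝ => ((s : ℝ), y)) (((0 : ℝ), (1 : ℝ))) x :=
      (hasDerivAt_const x s).prodMk (hasDerivAt_id x)
    exact ((hqd (s, x)).hasFDerivAt.comp_hasDerivAt x h1)
  have hderiv_t : ∀ s x : ℝ, HasDerivAt (fun τ => q τ x) (Hq (s, x)) s := by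
    intro s x
    have h1 : HasDerivAt (fun τ : ℝ => (τ, (x : ℝ))) (((1 : ℝ), (0 : ℝ))) s :=
      (hasDerivAt_id s).prodMk (hasDerivAt_const s x)
    exact ((hqd (s, x)).hasFDerivAt.comp_hasDerivAt s h1)
  have hsym : ∀ p : ℝ × ℝ, fderiv ℝ Gq p ((1 : ℝ), (0 : ℝ)) = fderiv ℝ Hq p ((0 : ℝ), (1 : ℝ)) := by
    intro p
    have hc : DifferentiableAt ℝ (fderiv ℝ (Function.uncurry q)) p := hq1d p
    rw [hGqdef, hHqdef, fderiv_clm_apply hc (differentiableAt_const _),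
      fderiv_clm_apply hc (differentiableAt_const _)]
    simp only [fderiv_fun_const, Pi.zero_apply, ContinuousLinearMap.comp_zero, zero_add,
      ContinuousLinearMap.add_apply, ContinuousLinearMap.flip_apply]
    exact second_derivative_symmetric (fun y => (hqd y).hasFDerivAt) (hc.hasFDerivAt) _ _
  -- W = ∂ₓ q at x = 0 ; Z = ζ(·,0)
  set W : ℝ → ℝ := fun s => Gq (s, 0) with hWdef
  set Z : ℝ → ℝ := fun s => ζ s 0 with hZdef
  have hZ : ContDiff ℝ 3 Z := hζ.comp (contDiff_id.prodMk contDiff_const)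
  have hZd : Differentiable ℝ Z := hZ.differentiable (by norm_num)
  have hZ3 : ContDiff ℝ (2+1) Z := by exact_mod_cast hZ
  have hZ'cd : ContDiff ℝ 2 (deriv Z) := (contDiff_succ_iff_deriv.mp hZ3).2.2
  have hZ'd : Differentiable ℝ (deriv Z) := hZ'cd.differentiable (by norm_num)
  have hf2 : ContDiff ℝ (1+1) f := by exact_mod_cast hf
  have hfd : Differentiable ℝ f := hf.differentiable (by norm_num)
  have hf'cd : ContDiff ℝ 1 (deriv f) := (contDiff_succ_iff_deriv.mp hf2).2.2
  have hf'd : Differentiable ℝ (deriv f) := hf'cd.differentiable (by norm_num)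
  have hiter : iteratedDeriv 2 f = deriv (deriv f) := by
    rw [iteratedDeriv_succ, iteratedDeriv_one]
  -- W has derivative fderiv Gq (t,0) (1,0)
  have hWd : ∀ t : ℝ, HasDerivAt W (fderiv ℝ Gq (t, 0) ((1:ℝ), (0:ℝ))) t := by
    intro t
    have h1 : HasDerivAt (fun τ : ℝ => (τ, (0 : ℝ))) (((1 : ℝ), (0 : ℝ))) t :=
      (hasDerivAt_id t).prodMk (hasDerivAt_const t 0)
    exact ((hGq (t, 0)).hasFDerivAt.comp_hasDerivAt t h1)
  -- abbreviation for the boundary forcing term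
  set Qf : ℝ → ℝ := fun t => ε / δ' * (q t 0) ^ 2 / (1 + ε * f t)
      + δ' * iteratedDeriv 2 f t + 1 / δ' * (1 + ε / 2 * f t) * f t - 1 / δ' * v t 0 with hQfdef
  -- mass equation at x = 0 : deriv Z s = -W s on [0,T]
  have hmass' : ∀ s ∈ Icc (0:ℝ) T, deriv Z s = -W s := by
    intro s hs
    have h0 := mass s hs 0 self_mem_Ici
    have h1 : deriv (fun y => q s y) 0 = W s := (hderiv_x s 0).deriv
    have h2 : deriv (fun τ => ζ τ 0) s = deriv Z s := rfl
    rw [h1, h2] at h0; linarith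
  -- momentum : for t ∈ [0,T], v1 t x = Qf t * exp(-x/δ') - Hq (t,x) on x ≥ 0
  have hkey : ∀ t ∈ Icc (0:ℝ) T,
      fderiv ℝ Gq (t, 0) ((1:ℝ), (0:ℝ)) = Qf t * (-(1/δ')) - v2 t 0 := by
    intro t ht
    have hv1eq : ∀ x ∈ Ici (0:ℝ), v1 t x = Qf t * Real.exp (-x / δ') - Hq (t, x) := by
      intro x hx
      have h0 := mom t ht x hx
      have h1 : deriv (fun s => q s x) t = Hq (t, x) := (hderiv_t t x).deriv
      rw [h1] at h0; rw [hQfdef]; linarith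
    -- derivative of the RHS at 0 within Ici 0
    have hexp : HasDerivAt (fun x : ℝ => Real.exp (-x / δ')) (-(1/δ')) 0 := by
      have h1 : HasDerivAt (fun x : ℝ => -x / δ') (-(1/δ')) 0 := by
        simpa [neg_div] using ((hasDerivAt_id (0:ℝ)).neg.div_const δ')
      simpa using h1.exp
    have hHqx : HasDerivAt (fun x : ℝ => Hq (t, x)) (fderiv ℝ Hq (t, 0) ((0:ℝ),(1:ℝ))) 0 := by
      have h1 : HasDerivAt (fun y : ℝ => ((t : ℝ), y)) (((0 : ℝ), (1 : ℝ))) 0 :=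
        (hasDerivAt_const 0 t).prodMk (hasDerivAt_id 0)
      exact ((hHq (t, 0)).hasFDerivAt.comp_hasDerivAt 0 h1)
    have hψ : HasDerivWithinAt (fun x : ℝ => Qf t * Real.exp (-x / δ') - Hq (t, x))
        (Qf t * (-(1/δ')) - fderiv ℝ Hq (t, 0) ((0:ℝ),(1:ℝ))) (Ici 0) 0 :=
      ((hexp.const_mul (Qf t)).sub hHqx).hasDerivWithinAt
    have hv1' : HasDerivWithinAt (v1 t)
        (Qf t * (-(1/δ')) - fderiv ℝ Hq (t, 0) ((0:ℝ),(1:ℝ))) (Ici 0) 0 :=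
      hψ.congr (fun x hx => hv1eq x hx) (by simpa using hv1eq 0 self_mem_Ici)
    have huniq : v2 t 0 = Qf t * (-(1/δ')) - fderiv ℝ Hq (t, 0) ((0:ℝ),(1:ℝ)) := by
      have hud : UniqueDiffWithinAt ℝ (Ici (0:ℝ)) 0 := uniqueDiffOn_Ici 0 0 self_mem_Ici
      rw [← (hv2 t ht 0 self_mem_Ici).derivWithin hud, hv1'.derivWithin hud]
    rw [hsym (t, 0)]; linarith
  -- the function g and its derivatives
  set g : ℝ → ℝ := fun s => Z s - f s with hgdef
  set g' : ℝ → ℝ := fun s => deriv Z s - deriv f s with hg'def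
  have hg'at : ∀ s : ℝ, HasDerivAt g (g' s) s := fun s =>
    ((hZd s).hasDerivAt.sub (hfd s).hasDerivAt)
  have hg'Icc : ∀ s ∈ Icc (0:ℝ) T, g' s = -W s - deriv f s := by
    intro s hs; rw [hg'def]; simp only []; rw [hmass' s hs]
  -- the coefficient a
  set a : ℝ → ℝ := fun s => (ε^2 * (q s 0)^2 / ((1 + ε * f s) * (1 + ε * ζ s 0))
      - 1 - ε/2 * (ζ s 0 + f s)) / (μ/3) with hadef
  -- ODE identity: the right-derivative of g' is a * g on [0,T)
  have hg'' : ∀ t ∈ Ico (0:ℝ) T, HasDerivWithinAt g' (a t * g t) (Ici t) t := by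
    intro t ht
    have htIcc : t ∈ Icc (0:ℝ) T := ⟨ht.1, ht.2.le⟩
    have hφ : HasDerivAt (fun s => -W s - deriv f s)
        (-(fderiv ℝ Gq (t, 0) ((1:ℝ), (0:ℝ))) - deriv (deriv f) t) t :=
      ((hWd t).neg.sub (hf'd t).hasDerivAt)
    have hval : -(fderiv ℝ Gq (t, 0) ((1:ℝ), (0:ℝ))) - deriv (deriv f) t = a t * g t := by
      rw [hkey t htIcc]
      have hell := hveq t htIcc 0 self_mem_Ici
      rw [hQfdef, hadef, hgdef, hiter]
      have h1 : (1 + ε * f t) ≠ 0 := (hfpos t).ne'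
      have h2 : (1 + ε * ζ t 0) ≠ 0 := (hpos t 0).ne'
      have h3 : v2 t 0 = (v t 0 - (1 / (2 * ε) * ((1 + ε * ζ t 0) ^ 2 - 1)
          + ε * (q t 0) ^ 2 / (1 + ε * ζ t 0))) / (μ/3) := by
        field_simp at hell ⊢; linarith
      rw [h3, ← hδsq]
      simp only [hZdef]
      field_simp
      ring
    rw [← hval]
    have hmem : Ici t ∩ Iio T ∈ nhdsWithin t (Ici t) :=
      inter_mem_nhdsWithin (Ici t) (Iio_mem_nhds ht.2)
    refine hφ.hasDerivWithinAt.congr_of_eventuallyEq ?_ (hg'Icc t htIcc)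
    filter_upwards [hmem] with s hs
    exact hg'Icc s ⟨le_trans ht.1 hs.1, hs.2.le⟩
  -- bound on a over [0,T]
  have hacont : ContinuousOn a (Icc (0:ℝ) T) := by
    have hq0 : Continuous fun s : ℝ => q s 0 :=
      (hq.continuous).comp (continuous_id.prodMk continuous_const)
    have hζ0 : Continuous fun s : ℝ => ζ s 0 :=
      (hζ.continuous).comp (continuous_id.prodMk continuous_const)
    apply ContinuousOn.div_const
    apply ContinuousOn.sub
    apply ContinuousOn.sub
    · exact ((continuous_const.mul (hq0.pow 2)).continuousOn.div
        (((continuous_const.add (continuous_const.mul hf.continuous)).mul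
          (continuous_const.add (continuous_const.mul hζ0))).continuousOn)
        (fun s _ => mul_ne_zero (hfpos s).ne' (hpos s 0).ne'))
    · exact continuousOn_const
    · exact (continuous_const.mul (hζ0.add hf.continuous)).continuousOn
  obtain ⟨C, hC⟩ : ∃ C, ∀ s ∈ Icc (0:ℝ) T, ‖a s‖ ≤ C :=
    isCompact_Icc.exists_bound_of_continuousOn hacont
  set K : ℝ := max C 1 with hKdef
  have hK1 : (1:ℝ) ≤ K := le_max_right _ _
  have hKa : ∀ s ∈ Icc (0:ℝ) T, |a s| ≤ K := fun s hs => le_trans (hC s hs) (le_max_left _ _)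
  -- Gronwall
  set G : ℝ → ℝ × ℝ := fun s => (g s, g' s) with hGdef
  set Gd : ℝ → ℝ × ℝ := fun s => (g' s, a s * g s) with hGddef
  have hGcont : ContinuousOn G (Icc (0:ℝ) T) :=
    ((hZd.continuous.sub hfd.continuous).prodMk
      (hZ'd.continuous.sub hf'd.continuous)).continuousOn
  have hG' : ∀ s ∈ Ico (0:ℝ) T, HasDerivWithinAt G (Gd s) (Ici s) s := fun s hs =>
    ((hg'at s).hasDerivWithinAt.prodMk (hg'' s hs))
  have hG0 : ‖G 0‖ ≤ 0 := by
    have h0T : (0:ℝ) ∈ Icc (0:ℝ) T := ⟨le_rfl, hT.le⟩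
    have hg0 : g 0 = 0 := by rw [hgdef]; simp [hZdef, hcomp1]
    have hW0 : W 0 = -deriv f 0 := by
      have h1 : deriv (fun y => q 0 y) 0 = W 0 := (hderiv_x 0 0).deriv
      rw [← h1, hcomp2]
    have hg'0 : g' 0 = 0 := by rw [hg'Icc 0 h0T, hW0]; ring
    simp [hGdef, hg0, hg'0, Prod.norm_def]
  have hbound : ∀ s ∈ Ico (0:ℝ) T, ‖Gd s‖ ≤ K * ‖G s‖ + 0 := by
    intro s hs
    have hsIcc : s ∈ Icc (0:ℝ) T := ⟨hs.1, hs.2.le⟩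
    have hGn : ‖G s‖ = max |g s| |g' s| := by rw [hGdef]; rfl
    have h1 : |g' s| ≤ K * ‖G s‖ := by
      rw [hGn]
      calc |g' s| ≤ max |g s| |g' s| := le_max_right _ _
        _ = 1 * max |g s| |g' s| := (one_mul _).symm
        _ ≤ K * max |g s| |g' s| := by
            apply mul_le_mul_of_nonneg_right hK1 (le_max_of_le_left (abs_nonneg _))
    have h2 : |a s * g s| ≤ K * ‖G s‖ := by
      rw [abs_mul, hGn]
      have h3 : |g s| ≤ max |g s| |g' s| := le_max_left _ _
      have hK0 : (0:ℝ) ≤ K := le_trans zero_le_one hK1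
      exact mul_le_mul (hKa s hsIcc) h3 (abs_nonneg _) hK0
    rw [add_zero]
    have : ‖Gd s‖ = max |g' s| |a s * g s| := by rw [hGddef]; rfl
    rw [this]
    exact max_le h1 h2
  have hfinal := norm_le_gronwallBound_of_norm_deriv_right_le hGcont hG' hG0 hbound
  intro t ht
  have h1 := hfinal t ht
  rw [gronwallBound_ε0_δ0] at h1
  have h2 : |g t| ≤ ‖G t‖ := by
    have : ‖G t‖ = max |g t| |g' t| := by rw [hGdef]; rfl
    rw [this]; exact le_max_left _ _
  have h3 : g t = 0 := abs_eq_zero.mp (le_antisymm (le_trans h2 h1) (abs_nonneg _))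
  have : Z t - f t = 0 := h3
  have : ζ t 0 - f t = 0 := this
  linarith
end

section
/- Let ε, μ > 0, c ∈ ℝ, and let Z : ℝ → ℝ be a C³ function with 1 + εZ > 0 everywhere, such that Z(x) → 0 and Z″(x) → 0 as x → +∞, and such that the pair ζ(t,x) := Z(x − c t), q(t,x) := c Z(x − c t) satisfies the momentum equation of the dimensionless Abbott–Boussinesq system, ∂_t q − (μ/3) ∂_x² ∂_t q + ∂_x( (1/(2ε)) h² + ε q²/h ) = 0 with h = 1 + εζ, at every (t,x) ∈ ℝ². Then for every x ∈ ℝ, −c² Z(x)/(1 + ε Z(x)) + Z(x) + (ε/2) Z(x)² + (c² μ/3) Z″(x) = 0. -/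
open Filter

/-- If `ζ(t,x) = Z(x−ct)`, `q(t,x) = cZ(x−ct)` is a solitary-wave solution of
the momentum equation of the dimensionless Abbott–Boussinesq system, with `Z`
and `Z″` decaying at `+∞`, then the profile `Z` satisfies the second-order ODE
`−c²Z/(1+εZ) + Z + (ε/2)Z² + (c²μ/3)Z″ = 0`. -/
theorem stmt_11 (ε μ c : ℝ) (hε : 0 < ε) (hμ : 0 < μ)
    (Z : ℝ → ℝ) (hZ : ContDiff ℝ 3 Z)
    (hpos : ∀ x, 0 < 1 + ε * Z x)
    (hZ0 : Tendsto Z atTop (nhds 0))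
    (hZ''0 : Tendsto (iteratedDeriv 2 Z) atTop (nhds 0))
    (mom : ∀ t x : ℝ,
      deriv (fun s => c * Z (x - c * s)) t
        - μ / 3 * iteratedDeriv 2 (fun y => deriv (fun s => c * Z (y - c * s)) t) x
        + deriv (fun y =>
            1 / (2 * ε) * (1 + ε * Z (y - c * t)) ^ 2
              + ε * (c * Z (y - c * t)) ^ 2 / (1 + ε * Z (y - c * t))) x = 0) :
    ∀ x : ℝ,
      -c ^ 2 * Z x / (1 + ε * Z x) + Z x + ε / 2 * (Z x) ^ 2
        + c ^ 2 * μ / 3 * iteratedDeriv 2 Z x = 0 := by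
  -- regularity facts
  have h3 : ContDiff ℝ ((2 : ℕ) + 1) Z := by exact_mod_cast hZ
  have hZd : Differentiable ℝ Z := (contDiff_succ_iff_deriv.mp h3).1
  have hW : ContDiff ℝ ((1 : ℕ) + 1) (deriv Z) := by
    exact_mod_cast (contDiff_succ_iff_deriv.mp h3).2.2
  have hWd : Differentiable ℝ (deriv Z) := (contDiff_succ_iff_deriv.mp hW).1
  have hW2 : ContDiff ℝ ((0 : ℕ) + 1) (deriv (deriv Z)) := by
    exact_mod_cast (contDiff_succ_iff_deriv.mp hW).2.2
  have hW2d : Differentiable ℝ (deriv (deriv Z)) := (contDiff_succ_iff_deriv.mp hW2).1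
  have hi2 : iteratedDeriv 2 Z = deriv (deriv Z) := by
    rw [iteratedDeriv_succ, iteratedDeriv_one]
  -- (a) time derivative
  have ha : ∀ x : ℝ, deriv (fun s => c * Z (x - c * s)) 0 = -c ^ 2 * deriv Z x := by
    intro x
    have h1 : HasDerivAt (fun s : ℝ => x - c * s) (-c) 0 := by
      simpa using ((hasDerivAt_id (0 : ℝ)).const_mul c).const_sub x
    have h2 : HasDerivAt Z (deriv Z (x - c * 0)) (x - c * 0) := (hZd _).hasDerivAt
    have h3' : HasDerivAt (fun s => c * Z (x - c * s)) (c * (deriv Z (x - c * 0) * -c)) 0 := by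
      simpa [Function.comp_def] using (h2.comp 0 h1).const_mul c
    rw [h3'.deriv]
    simp; ring
  -- the second-order spatial term
  have hb : ∀ x : ℝ,
      iteratedDeriv 2 (fun y => deriv (fun s => c * Z (y - c * s)) 0) x
        = -c ^ 2 * deriv (deriv (deriv Z)) x := by
    intro x
    have he : (fun y => deriv (fun s => c * Z (y - c * s)) 0)
        = fun y => -c ^ 2 * deriv Z y := funext fun y => ha y
    rw [he, iteratedDeriv_succ, iteratedDeriv_one]
    have hd1 : deriv (fun y => -c ^ 2 * deriv Z y) = fun y => -c ^ 2 * deriv (deriv Z) y :=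
      funext fun y => deriv_const_mul _ (hWd y)
    rw [hd1, deriv_const_mul _ (hW2d x)]
  -- the nonlinearity
  set F : ℝ → ℝ := fun z => 1 / (2 * ε) * (1 + ε * z) ^ 2 + ε * (c * z) ^ 2 / (1 + ε * z)
    with hF
  have hFcomp : ∀ x : ℝ, DifferentiableAt ℝ (fun y => F (Z y)) x := by
    intro x
    have h1 : DifferentiableAt ℝ (fun y => 1 + ε * Z y) x :=
      (differentiableAt_const _).add ((hZd x).const_mul ε)
    exact ((h1.pow 2).const_mul _).add
      ((((hZd x).const_mul c).pow 2).const_mul ε |>.div h1 (hpos x).ne')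
  -- momentum equation at t = 0, simplified
  have E : ∀ x : ℝ,
      -c ^ 2 * deriv Z x - μ / 3 * (-c ^ 2 * deriv (deriv (deriv Z)) x)
        + deriv (fun y => F (Z y)) x = 0 := by
    intro x
    have := mom 0 x
    simp only [mul_zero, sub_zero] at this
    rw [ha x, hb x] at this
    exact this
  -- the conserved quantity
  set H : ℝ → ℝ := fun x => -c ^ 2 * Z x + c ^ 2 * μ / 3 * iteratedDeriv 2 Z x + F (Z x)
    with hHdef
  have hHderiv : ∀ x : ℝ, HasDerivAt H
      (-c ^ 2 * deriv Z x + c ^ 2 * μ / 3 * deriv (deriv (deriv Z)) x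
        + deriv (fun y => F (Z y)) x) x := by
    intro x
    have h1 : HasDerivAt (fun y => -c ^ 2 * Z y) (-c ^ 2 * deriv Z x) x :=
      ((hZd x).hasDerivAt).const_mul _
    have h2 : HasDerivAt (fun y => c ^ 2 * μ / 3 * iteratedDeriv 2 Z y)
        (c ^ 2 * μ / 3 * deriv (deriv (deriv Z)) x) x := by
      rw [hi2]
      exact ((hW2d x).hasDerivAt).const_mul _
    have h3' : HasDerivAt (fun y => F (Z y)) (deriv (fun y => F (Z y)) x) x :=
      (hFcomp x).hasDerivAt
    exact (h1.add h2).add h3'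
  have hHd : Differentiable ℝ H := fun x => (hHderiv x).differentiableAt
  have hH0 : ∀ x : ℝ, deriv H x = 0 := by
    intro x
    rw [(hHderiv x).deriv]
    linear_combination E x
  have hconst : ∀ y : ℝ, H y = H 0 := fun y =>
    is_const_of_deriv_eq_zero hHd hH0 y 0
  -- limit at +∞
  have hFcont : ContinuousAt F 0 := by
    have h1 : DifferentiableAt ℝ F 0 := by
      have h1' : DifferentiableAt ℝ (fun z : ℝ => 1 + ε * z) 0 :=
        (differentiableAt_const _).add ((differentiableAt_fun_id).const_mul ε)
      exact ((h1'.pow 2).const_mul _).add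
        ((((differentiableAt_fun_id).const_mul c).pow 2).const_mul ε |>.div h1' (by norm_num))
    exact h1.continuousAt
  have hlim : Tendsto H atTop (nhds (1 / (2 * ε))) := by
    have t1 : Tendsto (fun x => -c ^ 2 * Z x) atTop (nhds (-c ^ 2 * 0)) :=
      hZ0.const_mul (-c ^ 2)
    have t2 : Tendsto (fun x => c ^ 2 * μ / 3 * iteratedDeriv 2 Z x)
        atTop (nhds (c ^ 2 * μ / 3 * 0)) := hZ''0.const_mul (c ^ 2 * μ / 3)
    have t3 : Tendsto (fun x => F (Z x)) atTop (nhds (F 0)) := hFcont.tendsto.comp hZ0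
    have hF0 : F 0 = 1 / (2 * ε) := by simp [hF]
    have hsum := (t1.add t2).add t3
    rw [hHdef]
    convert hsum using 2
    rw [hF0]; ring
  have hlim2 : Tendsto H atTop (nhds (H 0)) := by
    have : H = fun _ => H 0 := funext hconst
    rw [this]; exact tendsto_const_nhds
  have hH0val : H 0 = 1 / (2 * ε) := tendsto_nhds_unique hlim2 hlim
  -- conclude
  intro x
  have hx : H x = 1 / (2 * ε) := (hconst x).trans hH0val
  have hne : 1 + ε * Z x ≠ 0 := (hpos x).ne'
  have hεne : ε ≠ 0 := hε.ne'
  have hne' : 1 + Z x * ε ≠ 0 := by rwa [mul_comm]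
  simp only [hHdef, hF] at hx
  linear_combination (norm := (field_simp; ring)) hx
end

section
/- Let ε, μ > 0, c ∈ ℝ, and let Z : ℝ → ℝ be a C² function with 1 + εZ > 0 everywhere, satisfying the traveling-wave profile equation −c² Z/(1 + εZ) + Z + (ε/2) Z² + (c² μ/3) Z″ = 0 on ℝ, and such that Z(x) → 0 and Z′(x) → 0 as x → +∞. Then for every x ∈ ℝ, −(c²/ε) ( Z(x) − ln(1 + ε Z(x))/ε ) + (c² μ/6) Z′(x)² + (ε/6) Z(x)³ + Z(x)²/2 = 0. -/
open Filter

/-- First integral of the solitary-wave profile equation: multiplying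
`−c²Z/(1+εZ) + Z + (ε/2)Z² + (c²μ/3)Z″ = 0` by `Z′` and integrating, using the
decay of `Z` and `Z′` at `+∞`, yields
`−(c²/ε)(Z − ln(1+εZ)/ε) + (c²μ/6)(Z′)² + (ε/6)Z³ + Z²/2 = 0`. -/
theorem stmt_12 (ε μ c : ℝ) (hε : 0 < ε) (hμ : 0 < μ)
    (Z : ℝ → ℝ) (hZ : ContDiff ℝ 2 Z)
    (hpos : ∀ x, 0 < 1 + ε * Z x)
    (heq : ∀ x : ℝ,
      -c ^ 2 * Z x / (1 + ε * Z x) + Z x + ε / 2 * (Z x) ^ 2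
        + c ^ 2 * μ / 3 * iteratedDeriv 2 Z x = 0)
    (hZ0 : Tendsto Z atTop (nhds 0))
    (hZ'0 : Tendsto (deriv Z) atTop (nhds 0)) :
    ∀ x : ℝ,
      -(c ^ 2 / ε) * (Z x - Real.log (1 + ε * Z x) / ε)
        + c ^ 2 * μ / 6 * (deriv Z x) ^ 2
        + ε / 6 * (Z x) ^ 3 + (Z x) ^ 2 / 2 = 0 := by
  set E : ℝ → ℝ := fun x =>
    -(c ^ 2 / ε) * (Z x - Real.log (1 + ε * Z x) / ε)
      + c ^ 2 * μ / 6 * (deriv Z x) ^ 2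
      + ε / 6 * (Z x) ^ 3 + (Z x) ^ 2 / 2 with hE
  have hZdiff : Differentiable ℝ Z := hZ.differentiable (by norm_num)
  have hZ'diff : Differentiable ℝ (deriv Z) := by
    have := hZ.differentiable_iteratedDeriv 1 (by norm_num)
    rwa [iteratedDeriv_one] at this
  have hEderiv : ∀ x, HasDerivAt E 0 x := by
    intro x
    have hz : HasDerivAt Z (deriv Z x) x := (hZdiff x).hasDerivAt
    have hz' : HasDerivAt (deriv Z) (iteratedDeriv 2 Z x) x := by
      have : iteratedDeriv 2 Z x = deriv (deriv Z) x := by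
        rw [iteratedDeriv_succ, iteratedDeriv_one]
      rw [this]
      exact (hZ'diff x).hasDerivAt
    have hne : (1 + ε * Z x) ≠ 0 := (hpos x).ne'
    have hlog : HasDerivAt (fun y => Real.log (1 + ε * Z y))
        ((ε * deriv Z x) / (1 + ε * Z x)) x := by
      exact (((hasDerivAt_const x (1:ℝ)).add ((hasDerivAt_const x ε).mul hz)).log hne).congr_deriv
        (by simp only [Pi.add_apply, Pi.mul_apply]; ring)
    have hD : HasDerivAt E
        (-(c ^ 2 / ε) * (deriv Z x - (ε * deriv Z x) / (1 + ε * Z x) / ε)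
          + c ^ 2 * μ / 6 * (2 * deriv Z x ^ 1 * iteratedDeriv 2 Z x)
          + ε / 6 * (3 * Z x ^ 2 * deriv Z x)
          + (2 * Z x ^ 1 * deriv Z x) / 2) x := by
      have h1 := (hz.sub (hlog.div_const ε)).const_mul (-(c ^ 2 / ε))
      have h2 := (hz'.pow 2).const_mul (c ^ 2 * μ / 6)
      have h3 := (hz.pow 3).const_mul (ε / 6)
      have h4 := (hz.pow 2).div_const 2
      exact ((h1.add h2).add h3).add h4
    have key : (-(c ^ 2 / ε) * (deriv Z x - (ε * deriv Z x) / (1 + ε * Z x) / ε)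
          + c ^ 2 * μ / 6 * (2 * deriv Z x ^ 1 * iteratedDeriv 2 Z x)
          + ε / 6 * (3 * Z x ^ 2 * deriv Z x)
          + (2 * Z x ^ 1 * deriv Z x) / 2) = 0 := by
      have h := heq x
      linear_combination (norm := skip) (deriv Z x) * h
      field_simp
      ring
    rw [key] at hD
    exact hD
  have hconst : ∀ x y, E x = E y :=
    fun x y => is_const_of_deriv_eq_zero (fun t => (hEderiv t).differentiableAt)
      (fun t => (hEderiv t).deriv) x y
  intro x
  have hlim0 : Tendsto E atTop (nhds 0) := by
    have hcont : ContinuousAt (fun p : ℝ × ℝ =>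
        -(c ^ 2 / ε) * (p.1 - Real.log (1 + ε * p.1) / ε)
          + c ^ 2 * μ / 6 * p.2 ^ 2 + ε / 6 * p.1 ^ 3 + p.1 ^ 2 / 2) (0, 0) := by
      have : (1 + ε * (0:ℝ)) ≠ 0 := by norm_num
      fun_prop (disch := norm_num)
    have htend : Tendsto (fun y => (Z y, deriv Z y)) atTop (nhds ((0:ℝ), (0:ℝ))) :=
      hZ0.prodMk_nhds hZ'0
    have := hcont.tendsto.comp htend
    simp only [Real.log_one, mul_zero, add_zero] at this
    convert this using 2 <;> norm_num [hE, Function.comp_def]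
  have hlimx : Tendsto E atTop (nhds (E x)) := by
    have : E = fun _ => E x := funext fun y => (hconst y x)
    rw [this]
    exact tendsto_const_nhds
  have := tendsto_nhds_unique hlimx hlim0
  simpa [hE] using this
end
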